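/- Equivalence between well-posedness and martingale flows under a domination condition: Assume there is a σ-finite Borel measure m on ℝ^d such that ν̄ ≪ m for every ν̄ ∈ 𝓡_0, and m is minimal (for every Borel A ⊆ ℝ^d with m(A) > 0 there exists ν̄ ∈ 𝓡_0 with ν̄(A) > 0). Consider: (i) for every ν̄ ∈ 𝓡_0 there exists a unique 𝓡-regular solution η^{ν̄} of the martingale problem with initial law ν̄, and ν̄ ↦ η^{ν̄} is Borel; (ii) there exists an 𝓡-regular martingale flow, and 𝓡-regular martingale flows are m-a.e. unique (any two coincide for m-a.e. x ∈ ℝ^d). If 𝓡 is stable under convex combinations and satisfies bounded-disintegration stability, then (i) ⟹ (ii). If 𝓡 is stable under convex combinations and satisfies absolutely-continuous-disintegration stability, then (ii) ⟹ (i). -/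

import Mathlib

open MeasureTheory Set Filter
open scoped ENNReal NNReal RealInnerProductSpace

noncomputable section

/-- Euclidean space ℝ^d. -/
abbrev Ed (d : ℕ) := EuclideanSpace ℝ (Fin d)

/-- Frobenius norm of a `d × d` matrix. -/
def mnorm {d : ℕ} (M : Matrix (Fin d) (Fin d) ℝ) : ℝ :=
  Real.sqrt (∑ i, ∑ j, (M i j) ^ 2)

/-- Time derivative `∂_t f`. -/
def tderiv {d : ℕ} (f : ℝ → Ed d → ℝ) (t : ℝ) (x : Ed d) : ℝ :=
  deriv (fun s => f s x) t

/-- Second spatial partial derivative `∂²_{ij} g`. -/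
def pderiv2 {d : ℕ} (g : Ed d → ℝ) (i j : Fin d) (x : Ed d) : ℝ :=
  iteratedFDeriv ℝ 2 g x ![EuclideanSpace.single i 1, EuclideanSpace.single j 1]

/-- The diffusion operator `L f = (1/2) a : ∇²f + b · ∇f`. -/
def Lop {d : ℕ} (a : ℝ → Ed d → Matrix (Fin d) (Fin d) ℝ) (b : ℝ → Ed d → Ed d)
    (f : ℝ → Ed d → ℝ) (t : ℝ) (x : Ed d) : ℝ :=
  (1 / 2) * (∑ i, ∑ j, a t x i j * pderiv2 (f t) i j x) + (inner ℝ (b t x) (gradient (f t) x) : ℝ)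

/-- `f ∈ C^{1,2}_b((S,T) × ℝ^d)`: bounded, once continuously differentiable in time and
twice in space on `(S,T) × ℝ^d`, with bounded derivatives (extending continuously to
`[S,T] × ℝ^d`). -/
structure C12b {d : ℕ} (S T : ℝ) (f : ℝ → Ed d → ℝ) : Prop where
  cont : Continuous (Function.uncurry f)
  tdiff : ∀ x, ∀ t ∈ Ioo S T, DifferentiableAt ℝ (fun s => f s x) t
  xdiff : ∀ t ∈ Ioo S T, ContDiff ℝ 2 (f t)
  bdd : ∃ M : ℝ, ∀ t ∈ Ioo S T, ∀ x,
    |f t x| + |tderiv f t x| + ‖gradient (f t) x‖ + ‖iteratedFDeriv ℝ 2 (f t) x‖ ≤ M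

/-- `f ∈ C^{1,2}_c((S,T) × ℝ^d)`: in addition compactly supported in `(S,T) × ℝ^d`. -/
structure C12c {d : ℕ} (S T : ℝ) (f : ℝ → Ed d → ℝ) extends C12b S T f : Prop where
  supp : ∃ K : Set (ℝ × Ed d), IsCompact K ∧ K ⊆ (Ioo S T) ×ˢ (univ : Set (Ed d)) ∧
    ∀ p : ℝ × Ed d, p ∉ K → f p.1 p.2 = 0

/-- Narrow continuity of a curve of (finite) measures on the time interval `[S,T]`. -/
def NarrowlyCts {d : ℕ} (S T : ℝ) (ν : ℝ → Measure (Ed d)) : Prop :=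
  ∀ f : BoundedContinuousFunction (Ed d) ℝ,
    ContinuousOn (fun t => ∫ x, f x ∂(ν t)) (Icc S T)

/-- `(ν_t)` is a (measure-valued) weak solution of the Fokker–Planck equation
`∂_t ν_t = L_t^* ν_t` on `(S,T) × ℝ^d`. -/
structure IsFPE {d : ℕ} (S T : ℝ) (a : ℝ → Ed d → Matrix (Fin d) (Fin d) ℝ)
    (b : ℝ → Ed d → Ed d) (ν : ℝ → Measure (Ed d)) : Prop where
  meas : ∀ A : Set (Ed d), MeasurableSet A → Measurable fun t => ν t A
  integ : (∫⁻ t in Ioo S T, ∫⁻ x, ENNReal.ofReal (mnorm (a t x) + ‖b t x‖) ∂(ν t)) ≠ ∞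
  weak : ∀ f, C12c S T f →
    (∫ t in Ioo S T, ∫ x, (tderiv f t x + Lop a b f t x) ∂(ν t)) = 0

/-- The path space `C([S,T]; ℝ^d)`. -/
abbrev PathSp (d : ℕ) (S T : ℝ) := C(Icc S T, Ed d)

instance {d : ℕ} (S T : ℝ) : MeasurableSpace (PathSp d S T) := borel _
instance {d : ℕ} (S T : ℝ) : BorelSpace (PathSp d S T) := ⟨rfl⟩

/-- Evaluation map `e_t` on path space (with time clamped to `[S,T]`). -/
def eval {d : ℕ} {S T : ℝ} (h : S ≤ T) (t : ℝ) (γ : PathSp d S T) : Ed d :=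
  γ (projIcc S T h t)

/-- The natural filtration `F_t = σ(e_s : s ∈ [S,t])` on path space. -/
def natFilt {d : ℕ} {S T : ℝ} (h : S ≤ T) (t : ℝ) : MeasurableSpace (PathSp d S T) :=
  ⨆ s ∈ Icc S t, MeasurableSpace.comap (eval h s) inferInstance

/-- `X` is a martingale on `[S,T]` under `η` w.r.t. the natural filtration of path space. -/
def IsMartOn {d : ℕ} {S T : ℝ} (h : S ≤ T) (η : Measure (PathSp d S T))
    (X : ℝ → PathSp d S T → ℝ) : Prop :=
  (∀ t ∈ Icc S T, Integrable (X t) η) ∧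
  ∀ s t : ℝ, s ∈ Icc S T → t ∈ Icc S T → s ≤ t →
    η[X t | natFilt h s] =ᵐ[η] X s

/-- The process `t ↦ f_t(e_t) - ∫_S^t (∂_r f + L_r f)(e_r) dr`. -/
def MPproc {d : ℕ} {S T : ℝ} (h : S ≤ T) (a : ℝ → Ed d → Matrix (Fin d) (Fin d) ℝ)
    (b : ℝ → Ed d → Ed d) (f : ℝ → Ed d → ℝ) (t : ℝ) (γ : PathSp d S T) : ℝ :=
  f t (eval h t γ) -
    ∫ s in Ioc S t, (tderiv f s (eval h s γ) + Lop a b f s (eval h s γ))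

/-- `η` is a solution of the martingale problem associated to `L(a,b)` on `[S,T]`. -/
structure IsMP {d : ℕ} {S T : ℝ} (h : S ≤ T) (a : ℝ → Ed d → Matrix (Fin d) (Fin d) ℝ)
    (b : ℝ → Ed d → Ed d) (η : Measure (PathSp d S T)) : Prop where
  prob : IsProbabilityMeasure η
  integ : (∫⁻ γ, (∫⁻ t in Ioo S T,
      ENNReal.ofReal (mnorm (a t (eval h t γ)) + ‖b t (eval h t γ)‖)) ∂η) ≠ ∞
  mart : ∀ f, C12b S T f → IsMartOn h η (MPproc h a b f)


variable {d : ℕ} {T : ℝ}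

/-- `η` is an `𝓡`-regular solution of the MP. -/
def RRegMP (h : (0:ℝ) ≤ T) (a : ℝ → Ed d → Matrix (Fin d) (Fin d) ℝ)
    (b : ℝ → Ed d → Ed d) (R : Set (ℝ → Measure (Ed d)))
    (η : Measure (PathSp d 0 T)) : Prop :=
  IsMP h a b η ∧ ∃ μ ∈ R, ∀ t ∈ Icc (0:ℝ) T, Measure.map (eval h t) η = μ t

/-- `(η(x))_{x∈ℝ^d}` is an `𝓡`-regular martingale flow. -/
def IsRMF (h : (0:ℝ) ≤ T) (a : ℝ → Ed d → Matrix (Fin d) (Fin d) ℝ)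
    (b : ℝ → Ed d → Ed d) (R : Set (ℝ → Measure (Ed d)))
    (ηx : Ed d → Measure (PathSp d 0 T)) : Prop :=
  (∀ A : Set (PathSp d 0 T), MeasurableSet A → Measurable fun x => ηx x A) ∧
  (∀ x, IsProbabilityMeasure (ηx x)) ∧
  (∀ x, Measure.map (eval h 0) (ηx x) = Measure.dirac x) ∧
  ∀ ν₀ : Measure (Ed d), (∃ μ ∈ R, μ 0 = ν₀) → RRegMP h a b R (ν₀.bind ηx)

/-- Stability of `𝓡`-regularity under convex combinations. -/
def ConvexStable (h : (0:ℝ) ≤ T) (a : ℝ → Ed d → Matrix (Fin d) (Fin d) ℝ)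
    (b : ℝ → Ed d → Ed d) (R : Set (ℝ → Measure (Ed d))) : Prop :=
  ∀ (Z : Type) (_ : MeasurableSpace Z) (νZ : Measure Z), IsProbabilityMeasure νZ →
    ∀ ηz : Z → Measure (PathSp d 0 T),
    (∀ A : Set (PathSp d 0 T), MeasurableSet A → Measurable fun z => ηz z A) →
    (∀ᵐ z ∂νZ, RRegMP h a b R (ηz z)) →
    ((∫⁻ z, (∫⁻ t in Ioo (0:ℝ) T,
        ∫⁻ x, ENNReal.ofReal (‖b t x‖ + mnorm (a t x))
          ∂(Measure.map (eval h t) (ηz z))) ∂νZ) ≠ ∞) →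
    RRegMP h a b R (νZ.bind ηz)

/-- `(ηx)` is a regular conditional probability of `η` with respect to `e₀`. -/
def IsRCP (h : (0:ℝ) ≤ T) (η : Measure (PathSp d 0 T))
    (ηx : Ed d → Measure (PathSp d 0 T)) : Prop :=
  (∀ A : Set (PathSp d 0 T), MeasurableSet A → Measurable fun x => ηx x A) ∧
  (∀ x, IsProbabilityMeasure (ηx x)) ∧
  ((Measure.map (eval h 0) η).bind ηx = η) ∧
  (∀ᵐ x ∂(Measure.map (eval h 0) η), ηx x {γ | eval h 0 γ = x} = 1)

/-- Bounded-disintegration stability (eq:stability-convex-conditioning-bounded). -/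
def BoundedDisintStable (h : (0:ℝ) ≤ T)
    (a : ℝ → Ed d → Matrix (Fin d) (Fin d) ℝ)
    (b : ℝ → Ed d → Ed d) (R : Set (ℝ → Measure (Ed d))) : Prop :=
  ∀ η : Measure (PathSp d 0 T), RRegMP h a b R η →
    ∀ ηx : Ed d → Measure (PathSp d 0 T), IsRCP h η ηx →
    ∀ ν₀ : Measure (Ed d), IsProbabilityMeasure ν₀ →
    (∃ C : ℝ≥0, 0 < C ∧ ν₀ ≤ C • Measure.map (eval h 0) η) →
    RRegMP h a b R (ν₀.bind ηx)

/-- Absolutely-continuous-disintegration stability (eq:stability-convex-conditioning). -/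
def ACDisintStable (h : (0:ℝ) ≤ T)
    (a : ℝ → Ed d → Matrix (Fin d) (Fin d) ℝ)
    (b : ℝ → Ed d → Ed d) (R : Set (ℝ → Measure (Ed d))) : Prop :=
  ∀ η : Measure (PathSp d 0 T), RRegMP h a b R η →
    ∀ ηx : Ed d → Measure (PathSp d 0 T), IsRCP h η ηx →
    ∀ ν₀ : Measure (Ed d), (∃ μ ∈ R, μ 0 = ν₀) →
    ν₀ ≪ Measure.map (eval h 0) η →
    RRegMP h a b R (ν₀.bind ηx)


/-! ### Auxiliary infrastructure -/

set_option synthInstance.maxHeartbeats 1000000 in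
instance PathSp.polish (d : ℕ) (S T : ℝ) : PolishSpace (PathSp d S T) := inferInstance

section Aux

variable {d : ℕ} {S T : ℝ}

lemma measurable_eval (h : S ≤ T) (t : ℝ) : Measurable (eval (d := d) h t) :=
  (continuous_eval_const _).measurable

/-- The graph of `eval h 0` as a subset of the product. -/
def evGraph (h : S ≤ T) : Set (Ed d × PathSp d S T) := {p | eval h 0 p.2 = p.1}

lemma measurableSet_evGraph (h : S ≤ T) : MeasurableSet (evGraph (d := d) h) :=
  measurableSet_eq_fun ((measurable_eval h 0).comp measurable_snd) measurable_fst

lemma preimage_mk_evGraph (h : S ≤ T) (x : Ed d) :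
    Prod.mk x ⁻¹' evGraph (d := d) h = {γ | eval h 0 γ = x} := rfl

variable {T : ℝ} (h : (0:ℝ) ≤ T)

/-- mass-one condition implies the initial law is a Dirac mass. -/
lemma map_eval_eq_dirac {x : Ed d} (κx : Measure (PathSp d 0 T)) [IsProbabilityMeasure κx]
    (hx : κx {γ | eval h 0 γ = x} = 1) :
    Measure.map (eval h 0) κx = Measure.dirac x := by
  have hD : MeasurableSet {γ : PathSp d 0 T | eval h 0 γ = x} :=
    measurableSet_eq_fun (measurable_eval h 0) measurable_const
  have hDc : κx {γ : PathSp d 0 T | eval h 0 γ = x}ᶜ = 0 := by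
    have h2 := measure_add_measure_compl (μ := κx) hD
    rw [hx, measure_univ] at h2
    have h3 : (1:ℝ≥0∞) + κx {γ : PathSp d 0 T | eval h 0 γ = x}ᶜ = 1 + 0 := by
      simpa using h2
    exact (ENNReal.add_right_inj (by simp)).mp h3
  ext s hs
  rw [Measure.map_apply (measurable_eval h 0) hs, Measure.dirac_apply' _ hs]
  by_cases hxs : x ∈ s
  · have h1 : κx {γ : PathSp d 0 T | eval h 0 γ = x} ≤ κx (eval h 0 ⁻¹' s) :=
      measure_mono (fun γ hγ => by simp only [mem_setOf_eq] at hγ; simp [Set.mem_preimage, hγ, hxs])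
    have h2 : κx (eval h 0 ⁻¹' s) ≤ 1 := prob_le_one
    simp only [hxs, Set.indicator_of_mem, Pi.one_apply]
    exact le_antisymm h2 (hx ▸ h1)
  · have : eval h 0 ⁻¹' s ⊆ {γ : PathSp d 0 T | eval h 0 γ = x}ᶜ := by
      intro γ hγ hx'
      simp only [mem_setOf_eq] at hx'
      exact hxs (hx' ▸ hγ)
    simp only [hxs, Set.indicator_of_notMem, not_false_iff]
    exact measure_mono_null this hDc

/-- Converse: dirac initial law gives mass one on the fibre. -/
lemma mass_one_of_map_eval {x : Ed d} (κx : Measure (PathSp d 0 T))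
    (hx : Measure.map (eval h 0) κx = Measure.dirac x) :
    κx {γ | eval h 0 γ = x} = 1 := by
  have hD : MeasurableSet ({x} : Set (Ed d)) := measurableSet_singleton x
  have := Measure.map_apply (μ := κx) (measurable_eval h 0) hD
  rw [hx, Measure.dirac_apply' _ hD] at this
  simp only [Set.indicator_of_mem, Set.mem_singleton_iff, Pi.one_apply] at this
  have heq : eval h 0 ⁻¹' ({x} : Set (Ed d)) = {γ : PathSp d 0 T | eval h 0 γ = x} := by
    ext γ; simp [Set.mem_preimage]
  rw [heq] at this; exact this.symm

end Aux

section RCP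

open ProbabilityTheory

variable {d : ℕ} {T : ℝ} (h : (0:ℝ) ≤ T)

lemma measurableSet_fiber (x : Ed d) : MeasurableSet {γ : PathSp d 0 T | eval h 0 γ = x} :=
  measurableSet_eq_fun (measurable_eval h 0) measurable_const

lemma mass_one_of_compl_zero {β : Type*} [MeasurableSpace β] {μ : Measure β}
    [IsProbabilityMeasure μ] {s : Set β} (hs : MeasurableSet s) (h0 : μ sᶜ = 0) : μ s = 1 := by
  have h1 := measure_add_measure_compl (μ := μ) hs
  rw [h0, add_zero, measure_univ] at h1; exact h1

lemma compl_zero_of_mass_one {β : Type*} [MeasurableSpace β] {μ : Measure β}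
    [IsProbabilityMeasure μ] {s : Set β} (hs : MeasurableSet s) (h1 : μ s = 1) : μ sᶜ = 0 := by
  have h2 := measure_add_measure_compl (μ := μ) hs
  rw [h1, measure_univ] at h2
  have h3 : (1:ℝ≥0∞) + μ sᶜ = 1 + 0 := by simpa using h2
  exact (ENNReal.add_right_inj (by simp)).mp h3

lemma meas_inter_fiber {x : Ed d} (κx : Measure (PathSp d 0 T)) [IsProbabilityMeasure κx]
    (hx : κx {γ | eval h 0 γ = x} = 1) {s : Set (PathSp d 0 T)} (_hs : MeasurableSet s) :
    κx s = κx (s ∩ {γ | eval h 0 γ = x}) := by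
  have hD := measurableSet_fiber h x
  have hDc : κx {γ : PathSp d 0 T | eval h 0 γ = x}ᶜ = 0 := compl_zero_of_mass_one hD hx
  have h1 := measure_inter_add_diff (μ := κx) s hD
  have h0 : κx (s \ {γ | eval h 0 γ = x}) = 0 :=
    measure_mono_null (diff_subset_compl _ _) hDc
  rw [h0, add_zero] at h1; exact h1.symm

lemma bind_congr_ae {κ1 κ2 : Ed d → Measure (PathSp d 0 T)} {ν : Measure (Ed d)}
    (hm1 : Measurable κ1) (hm2 : Measurable κ2)
    (hae : ∀ᵐ x ∂ν, κ1 x = κ2 x) : ν.bind κ1 = ν.bind κ2 := by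
  ext s hs
  rw [Measure.bind_apply hs hm1.aemeasurable, Measure.bind_apply hs hm2.aemeasurable]
  exact lintegral_congr_ae (hae.mono fun x hx => by simp only [hx])

lemma bind_prob {κ : Ed d → Measure (PathSp d 0 T)} {ν : Measure (Ed d)}
    [IsProbabilityMeasure ν] (hm : Measurable κ) (hp : ∀ x, IsProbabilityMeasure (κ x)) :
    IsProbabilityMeasure (ν.bind κ) := by
  constructor
  rw [Measure.bind_apply MeasurableSet.univ hm.aemeasurable]
  have : ∀ x, κ x Set.univ = 1 := fun x => (hp x).measure_univ
  simp [this]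

lemma map_eval_bind {κ : Ed d → Measure (PathSp d 0 T)} {ν : Measure (Ed d)}
    (hm : Measurable κ) (hp : ∀ x, IsProbabilityMeasure (κ x))
    (hd : ∀ᵐ x ∂ν, κ x {γ | eval h 0 γ = x} = 1) :
    Measure.map (eval h 0) (ν.bind κ) = ν := by
  ext s hs
  rw [Measure.map_apply (measurable_eval h 0) hs,
    Measure.bind_apply (hs.preimage (measurable_eval h 0)) hm.aemeasurable]
  have hae : ∀ᵐ x ∂ν, κ x (eval h 0 ⁻¹' s) = s.indicator (fun _ => (1:ℝ≥0∞)) x := by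
    filter_upwards [hd] with x hx
    haveI := hp x
    have := map_eval_eq_dirac h (κ x) hx
    rw [← Measure.map_apply (measurable_eval h 0) hs, this, Measure.dirac_apply' _ hs]
    rfl
  rw [lintegral_congr_ae hae, lintegral_indicator hs]
  simp

lemma measurable_pairE : Measurable (fun γ : PathSp d 0 T => (eval h 0 γ, γ)) :=
  (measurable_eval h 0).prodMk measurable_id

lemma map_snd_pair (η : Measure (PathSp d 0 T)) :
    Measure.map Prod.snd (Measure.map (fun γ => (eval h 0 γ, γ)) η) = η := by
  rw [Measure.map_map measurable_snd (measurable_pairE h)]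
  exact Measure.map_id

lemma fst_map_pair (η : Measure (PathSp d 0 T)) :
    (Measure.map (fun γ => (eval h 0 γ, γ)) η).fst = Measure.map (eval h 0) η := by
  rw [Measure.fst, Measure.map_map measurable_fst (measurable_pairE h)]
  rfl

lemma map_snd_compProd (μ : Measure (Ed d)) [SFinite μ]
    (K : Kernel (Ed d) (PathSp d 0 T)) [IsSFiniteKernel K] :
    Measure.map Prod.snd (μ ⊗ₘ K) = μ.bind (fun x => K x) := by
  ext s hs
  rw [Measure.map_apply measurable_snd hs, Measure.compProd_apply (measurable_snd hs),
    Measure.bind_apply hs K.measurable.aemeasurable]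
  rfl

set_option synthInstance.maxHeartbeats 1000000 in
lemma exists_isRCP (η : Measure (PathSp d 0 T)) [IsProbabilityMeasure η] :
    ∃ κ : Ed d → Measure (PathSp d 0 T), Measurable κ ∧ IsRCP h η κ := by
  set ρ := Measure.map (fun γ => (eval h 0 γ, γ)) η with hρ
  haveI : IsProbabilityMeasure ρ := Measure.isProbabilityMeasure_map (measurable_pairE h).aemeasurable
  have hdis := ρ.disintegrate ρ.condKernel
  refine ⟨fun x => ρ.condKernel x, ρ.condKernel.measurable, ?_, ?_, ?_, ?_⟩
  · exact fun A hA => Kernel.measurable_coe _ hA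
  · intro x; infer_instance
  · have h2 := congrArg (Measure.map Prod.snd) hdis
    rw [map_snd_compProd, map_snd_pair] at h2
    rw [← fst_map_pair h]
    exact h2
  · have hGr := measurableSet_evGraph (d := d) h
    have hρGr : ρ (evGraph h)ᶜ = 0 := by
      rw [hρ, Measure.map_apply (measurable_pairE h) hGr.compl]
      have hemp : (fun γ : PathSp d 0 T => (eval h 0 γ, γ)) ⁻¹' (evGraph h)ᶜ = ∅ := by
        ext γ; simp [evGraph]
      rw [hemp]; exact measure_empty
    rw [← hdis, Measure.compProd_apply hGr.compl] at hρGr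
    have hmeas : Measurable fun x => ρ.condKernel x (Prod.mk x ⁻¹' (evGraph h)ᶜ) :=
      Kernel.measurable_kernel_prodMk_left hGr.compl
    rw [lintegral_eq_zero_iff hmeas] at hρGr
    rw [← fst_map_pair h]
    filter_upwards [hρGr] with x hx
    simp only [Pi.zero_apply] at hx
    have hpre : Prod.mk x ⁻¹' (evGraph h)ᶜ = {γ : PathSp d 0 T | eval h 0 γ = x}ᶜ := rfl
    rw [hpre] at hx
    exact mass_one_of_compl_zero (measurableSet_fiber h x) hx

lemma map_pair_bind (ν : Measure (Ed d)) [IsProbabilityMeasure ν]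
    {κ : Ed d → Measure (PathSp d 0 T)} (hm : Measurable κ)
    (hp : ∀ x, IsProbabilityMeasure (κ x))
    (hd : ∀ᵐ x ∂ν, κ x {γ | eval h 0 γ = x} = 1) :
    Measure.map (fun γ => (eval h 0 γ, γ)) (ν.bind κ) =
      ν ⊗ₘ (⟨κ, hm⟩ : Kernel (Ed d) (PathSp d 0 T)) := by
  set K : Kernel (Ed d) (PathSp d 0 T) := ⟨κ, hm⟩ with hK
  haveI : IsMarkovKernel K := ⟨hp⟩
  haveI : IsProbabilityMeasure (ν.bind κ) := bind_prob hm hp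
  haveI : IsProbabilityMeasure (Measure.map (fun γ => (eval h 0 γ, γ)) (ν.bind κ)) :=
    Measure.isProbabilityMeasure_map (measurable_pairE h).aemeasurable
  refine MeasureTheory.ext_of_generate_finite _ generateFrom_prod.symm isPiSystem_prod ?_ (by
    simp [measure_univ])
  classical
  rintro s ⟨A, hA, B, hB, rfl⟩
  simp only [Set.mem_setOf_eq] at hA hB
  have hpre : (fun γ : PathSp d 0 T => (eval h 0 γ, γ)) ⁻¹' (A ×ˢ B) =
      (eval h 0 ⁻¹' A) ∩ B := by
    ext γ; simp [Set.mem_prod]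
  rw [Measure.map_apply (measurable_pairE h) (hA.prod hB), hpre,
    Measure.bind_apply ((hA.preimage (measurable_eval h 0)).inter hB) hm.aemeasurable,
    Measure.compProd_apply (hA.prod hB)]
  refine lintegral_congr_ae ?_
  filter_upwards [hd] with x hx
  haveI := hp x
  have hKx : K x = κ x := rfl
  rw [Set.mk_preimage_prod_right_eq_if, hKx]
  by_cases hxA : x ∈ A
  · rw [if_pos hxA]
    have h1 : κ x ((eval h 0 ⁻¹' A ∩ B) ∩ {γ | eval h 0 γ = x}) =
        κ x (B ∩ {γ | eval h 0 γ = x}) := by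
      congr 1
      ext γ
      simp only [Set.mem_inter_iff, Set.mem_preimage, Set.mem_setOf_eq]
      exact ⟨fun ⟨⟨_, hb⟩, he⟩ => ⟨hb, he⟩, fun ⟨hb, he⟩ => ⟨⟨he ▸ hxA, hb⟩, he⟩⟩
    rw [meas_inter_fiber h (κ x) hx ((hA.preimage (measurable_eval h 0)).inter hB), h1,
      ← meas_inter_fiber h (κ x) hx hB]
  · rw [if_neg hxA]
    have h1 : (eval h 0 ⁻¹' A ∩ B) ∩ {γ : PathSp d 0 T | eval h 0 γ = x} = ∅ := by
      ext γ
      simp only [Set.mem_inter_iff, Set.mem_preimage, Set.mem_setOf_eq, Set.mem_empty_iff_false,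
        iff_false, not_and]
      intro ⟨ha, _⟩ he
      exact hxA (he ▸ ha)
    rw [meas_inter_fiber h (κ x) hx ((hA.preimage (measurable_eval h 0)).inter hB), h1]

lemma eq_condKernel_of_isRCP (η : Measure (PathSp d 0 T)) [IsProbabilityMeasure η]
    {κ : Ed d → Measure (PathSp d 0 T)} (hm : Measurable κ) (hrcp : IsRCP h η κ) :
    ∀ᵐ x ∂(Measure.map (eval h 0) η),
      κ x = (Measure.map (fun γ => (eval h 0 γ, γ)) η).condKernel x := by
  set ρ := Measure.map (fun γ => (eval h 0 γ, γ)) η with hρ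
  haveI : IsProbabilityMeasure ρ := Measure.isProbabilityMeasure_map (measurable_pairE h).aemeasurable
  haveI : IsProbabilityMeasure (Measure.map (eval h 0) η) :=
    Measure.isProbabilityMeasure_map (measurable_eval h 0).aemeasurable
  set K : Kernel (Ed d) (PathSp d 0 T) := ⟨κ, hm⟩ with hK
  haveI : IsMarkovKernel K := ⟨hrcp.2.1⟩
  have hfst : ρ.fst = Measure.map (eval h 0) η := fst_map_pair h η
  have hcomp : ρ = ρ.fst ⊗ₘ K := by
    rw [hfst]
    conv_lhs => rw [hρ, ← hrcp.2.2.1]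
    exact map_pair_bind h _ hm hrcp.2.1 hrcp.2.2.2
  have hae := ProbabilityTheory.eq_condKernel_of_measure_eq_compProd K hcomp
  rw [hfst] at hae
  exact hae

lemma isRCP_ae_eq (η : Measure (PathSp d 0 T)) [IsProbabilityMeasure η]
    {κ1 κ2 : Ed d → Measure (PathSp d 0 T)} (hm1 : Measurable κ1) (hm2 : Measurable κ2)
    (h1 : IsRCP h η κ1) (h2 : IsRCP h η κ2) :
    ∀ᵐ x ∂(Measure.map (eval h 0) η), κ1 x = κ2 x := by
  filter_upwards [eq_condKernel_of_isRCP h η hm1 h1, eq_condKernel_of_isRCP h η hm2 h2]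
    with x ha hb
  rw [ha, hb]

end RCP

section Mix

variable {d : ℕ} {T : ℝ} (h : (0:ℝ) ≤ T)
variable (a : ℝ → Ed d → Matrix (Fin d) (Fin d) ℝ) (b : ℝ → Ed d → Ed d)

/-- The joint integrability functional appearing in `ConvexStable`. -/
def Imix (η : Measure (PathSp d 0 T)) : ℝ≥0∞ :=
  ∫⁻ t in Ioo (0:ℝ) T, ∫⁻ x, ENNReal.ofReal (‖b t x‖ + mnorm (a t x))
    ∂(Measure.map (eval h t) η)

variable {R : Set (ℝ → Measure (Ed d))}
variable {a b}

lemma RReg_prob {η : Measure (PathSp d 0 T)} (hη : RRegMP h a b R η) :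
    IsProbabilityMeasure η := hη.1.prob

lemma RReg_initial {η : Measure (PathSp d 0 T)} (hη : RRegMP h a b R η) :
    ∃ μ ∈ R, μ 0 = Measure.map (eval h 0) η := by
  obtain ⟨μ, hμ, hc⟩ := hη.2
  exact ⟨μ, hμ, (hc 0 ⟨le_refl 0, h⟩).symm⟩

lemma Imix_ne_top
    (hR : ∀ μ ∈ R, (∀ t ∈ Icc (0 : ℝ) T, IsProbabilityMeasure (μ t)) ∧
      NarrowlyCts 0 T μ ∧ IsFPE 0 T a b μ)
    {η : Measure (PathSp d 0 T)} (hη : RRegMP h a b R η) : Imix h a b η ≠ ∞ := by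
  obtain ⟨μ, hμR, hc⟩ := hη.2
  have hint := (hR μ hμR).2.2.integ
  have hcong : ∀ᵐ t ∂(volume.restrict (Ioo (0:ℝ) T)),
      (∫⁻ x, ENNReal.ofReal (‖b t x‖ + mnorm (a t x)) ∂(Measure.map (eval h t) η)) =
        ∫⁻ x, ENNReal.ofReal (mnorm (a t x) + ‖b t x‖) ∂(μ t) := by
    refine (ae_restrict_iff' measurableSet_Ioo).2 (ae_of_all _ fun t ht => ?_)
    rw [hc t (Ioo_subset_Icc_self ht)]
    congr 1
    funext x
    rw [add_comm]
  rw [Imix, lintegral_congr_ae hcong]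
  exact hint

lemma sum_smul_prob {β : Type*} [MeasurableSpace β] {ι : Type} (c : ι → ℝ≥0∞)
    (hc : ∑' n, c n = 1) (μn : ι → Measure β) (hp : ∀ n, IsProbabilityMeasure (μn n)) :
    IsProbabilityMeasure (Measure.sum fun n => c n • μn n) := by
  constructor
  rw [Measure.sum_apply _ MeasurableSet.univ]
  simp only [Measure.smul_apply, smul_eq_mul, measure_univ, mul_one]
  exact hc

lemma mix_RReg {ι : Type} [MeasurableSpace ι] [DiscreteMeasurableSpace ι] [Countable ι]
    (hCS : ConvexStable h a b R)
    (c : ι → ℝ≥0∞) (hc1 : ∑' n, c n = 1)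
    (ηn : ι → Measure (PathSp d 0 T)) (hprob : ∀ n, IsProbabilityMeasure (ηn n))
    (hreg : ∀ n, c n ≠ 0 → RRegMP h a b R (ηn n))
    (hI : ∑' n, c n * Imix h a b (ηn n) ≠ ∞) :
    RRegMP h a b R (Measure.sum (fun n => c n • ηn n)) := by
  classical
  set νZ : Measure ι := Measure.sum (fun n => c n • Measure.dirac n) with hνZ
  haveI : IsProbabilityMeasure νZ := sum_smul_prob c hc1 _ (fun n => by infer_instance)
  have hbind : νZ.bind ηn = Measure.sum (fun n => c n • ηn n) := by
    ext s hs
    rw [Measure.bind_apply hs Measurable.of_discrete.aemeasurable, hνZ, lintegral_sum_measure,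
      Measure.sum_apply _ hs]
    refine tsum_congr fun n => ?_
    rw [lintegral_smul_measure, lintegral_dirac, Measure.smul_apply, smul_eq_mul]
  rw [← hbind]
  refine hCS ι _ νZ inferInstance ηn (fun A hA => Measurable.of_discrete) ?_ ?_
  · rw [ae_iff]
    rw [hνZ, Measure.sum_apply _ MeasurableSet.of_discrete]
    refine ENNReal.tsum_eq_zero.2 fun n => ?_
    rw [Measure.smul_apply, smul_eq_mul]
    by_cases hn : RRegMP h a b R (ηn n)
    · have : n ∉ {z | ¬ RRegMP h a b R (ηn z)} := by simp [hn]
      rw [Measure.dirac_apply' _ MeasurableSet.of_discrete, Set.indicator_of_notMem this]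
      simp
    · have : c n = 0 := by by_contra hc0; exact hn (hreg n hc0)
      simp [this]
  · have heq : (∫⁻ z, (∫⁻ t in Ioo (0:ℝ) T,
        ∫⁻ x, ENNReal.ofReal (‖b t x‖ + mnorm (a t x))
          ∂(Measure.map (eval h t) (ηn z))) ∂νZ) = ∑' n, c n * Imix h a b (ηn n) := by
      rw [hνZ, lintegral_sum_measure]
      refine tsum_congr fun n => ?_
      rw [lintegral_smul_measure, lintegral_dirac]
      rfl
    rw [heq]
    exact hI

lemma sum_bool_mix (μt μf : Measure (PathSp d 0 T)) :
    Measure.sum (fun z : Bool => (2⁻¹ : ℝ≥0∞) • (if z then μt else μf)) =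
      (2⁻¹ : ℝ≥0∞) • μt + (2⁻¹ : ℝ≥0∞) • μf := by
  rw [Measure.sum_fintype, Fintype.sum_bool]
  simp

lemma mix_two_RReg (hCS : ConvexStable h a b R)
    {η1 η2 : Measure (PathSp d 0 T)} (h1 : RRegMP h a b R η1) (h2 : RRegMP h a b R η2)
    (hI1 : Imix h a b η1 ≠ ∞) (hI2 : Imix h a b η2 ≠ ∞) :
    RRegMP h a b R ((2⁻¹ : ℝ≥0∞) • η1 + (2⁻¹ : ℝ≥0∞) • η2) := by
  have hsum := mix_RReg h hCS (fun _ : Bool => (2⁻¹ : ℝ≥0∞))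
    (by rw [tsum_fintype, Fintype.sum_bool]; exact ENNReal.inv_two_add_inv_two)
    (fun z => if z then η1 else η2)
    (fun z => by haveI := RReg_prob h h1; haveI := RReg_prob h h2; split <;>
      infer_instance)
    (fun z _ => by split; exacts [h1, h2])
    (by
      rw [tsum_fintype, Fintype.sum_bool]
      simp only [if_true, if_false]
      exact ENNReal.add_ne_top.2 ⟨ENNReal.mul_ne_top (by simp) hI1,
        ENNReal.mul_ne_top (by simp) hI2⟩)
  rwa [sum_bool_mix] at hsum

lemma prob_two {β : Type*} [MeasurableSpace β] (μ1 μ2 : Measure β)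
    [IsProbabilityMeasure μ1] [IsProbabilityMeasure μ2] :
    IsProbabilityMeasure ((2⁻¹ : ℝ≥0∞) • μ1 + (2⁻¹ : ℝ≥0∞) • μ2) := by
  constructor
  simp only [Measure.add_apply, Measure.smul_apply, smul_eq_mul, measure_univ, mul_one]
  exact ENNReal.inv_two_add_inv_two

lemma map_eval_sum {ι : Type} (t : ℝ) (c : ι → ℝ≥0∞) (μn : ι → Measure (PathSp d 0 T)) :
    Measure.map (eval h t) (Measure.sum fun n => c n • μn n) =
      Measure.sum (fun n => c n • Measure.map (eval h t) (μn n)) := by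
  ext s hs
  rw [Measure.map_apply (measurable_eval h t) hs,
    Measure.sum_apply _ (hs.preimage (measurable_eval h t)), Measure.sum_apply _ hs]
  refine tsum_congr fun n => ?_
  simp [Measure.smul_apply, Measure.map_apply (measurable_eval h t) hs]

lemma map_eval_add2 (t : ℝ) (μ1 μ2 : Measure (PathSp d 0 T)) :
    Measure.map (eval h t) ((2⁻¹ : ℝ≥0∞) • μ1 + (2⁻¹ : ℝ≥0∞) • μ2) =
      (2⁻¹ : ℝ≥0∞) • Measure.map (eval h t) μ1 + (2⁻¹ : ℝ≥0∞) • Measure.map (eval h t) μ2 := by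
  rw [Measure.map_add _ _ (measurable_eval h t), Measure.map_smul, Measure.map_smul]

lemma bind_sum {ι : Type} (c : ι → ℝ≥0∞) (μn : ι → Measure (Ed d))
    {κ : Ed d → Measure (PathSp d 0 T)} (hm : Measurable κ) :
    (Measure.sum (fun n => c n • μn n)).bind κ =
      Measure.sum (fun n => c n • (μn n).bind κ) := by
  ext s hs
  rw [Measure.bind_apply hs hm.aemeasurable, lintegral_sum_measure, Measure.sum_apply _ hs]
  refine tsum_congr fun n => ?_
  rw [lintegral_smul_measure, Measure.smul_apply, Measure.bind_apply hs hm.aemeasurable, smul_eq_mul]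

lemma bind_add2 (μ1 μ2 : Measure (Ed d)) {κ : Ed d → Measure (PathSp d 0 T)}
    (hm : Measurable κ) :
    ((2⁻¹ : ℝ≥0∞) • μ1 + (2⁻¹ : ℝ≥0∞) • μ2).bind κ =
      (2⁻¹ : ℝ≥0∞) • μ1.bind κ + (2⁻¹ : ℝ≥0∞) • μ2.bind κ := by
  ext s hs
  rw [Measure.bind_apply hs hm.aemeasurable, lintegral_add_measure, lintegral_smul_measure,
    lintegral_smul_measure]
  simp [Measure.add_apply, Measure.smul_apply, Measure.bind_apply hs hm.aemeasurable]

lemma exists_weights (I : ℕ → ℝ≥0∞) (hI : ∀ n, I n ≠ ∞) :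
    ∃ c : ℕ → ℝ≥0∞, (∀ n, c n ≠ 0) ∧ (∑' n, c n = 1) ∧ (∑' n, c n * I n ≠ ∞) := by
  classical
  set w : ℕ → ℝ≥0∞ := fun n => (2⁻¹ : ℝ≥0∞) ^ n * (1 + I n)⁻¹ with hw
  have h1I0 : ∀ n, (1 : ℝ≥0∞) + I n ≠ 0 := fun n => by
    intro h0
    rw [add_eq_zero] at h0
    exact one_ne_zero h0.1
  have h1It : ∀ n, (1 : ℝ≥0∞) + I n ≠ ∞ := fun n => ENNReal.add_ne_top.2 ⟨by simp, hI n⟩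
  have hwpos : ∀ n, w n ≠ 0 := by
    intro n
    refine mul_ne_zero (pow_ne_zero n (ENNReal.inv_ne_zero.2 (by simp))) ?_
    rw [ne_eq, ENNReal.inv_eq_zero]
    exact h1It n
  have hgeom : (∑' n : ℕ, (2⁻¹ : ℝ≥0∞) ^ n) = 2 := by
    rw [ENNReal.tsum_geometric, ENNReal.one_sub_inv_two, inv_inv]
  have hwle : ∀ n, w n ≤ (2⁻¹ : ℝ≥0∞) ^ n := by
    intro n
    rw [hw]
    calc (2⁻¹ : ℝ≥0∞) ^ n * (1 + I n)⁻¹ ≤ (2⁻¹ : ℝ≥0∞) ^ n * 1 := by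
          refine mul_le_mul_right ?_ _
          rw [ENNReal.inv_le_one]
          exact le_add_right le_rfl
      _ = (2⁻¹ : ℝ≥0∞) ^ n := mul_one _
  set W : ℝ≥0∞ := ∑' n, w n with hW
  have hWne : W ≠ 0 := by
    intro h0
    exact hwpos 0 (le_antisymm (h0 ▸ ENNReal.le_tsum 0) zero_le')
  have hWle : W ≤ 2 := le_trans (ENNReal.tsum_le_tsum hwle) hgeom.le
  have hWtop : W ≠ ∞ := ne_top_of_le_ne_top (by simp) hWle
  refine ⟨fun n => w n * W⁻¹, ?_, ?_, ?_⟩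
  · intro n
    exact mul_ne_zero (hwpos n) (ENNReal.inv_ne_zero.2 hWtop)
  · rw [ENNReal.tsum_mul_right, ← hW, ENNReal.mul_inv_cancel hWne hWtop]
  · have hterm : ∀ n, w n * W⁻¹ * I n ≤ (2⁻¹ : ℝ≥0∞) ^ n * W⁻¹ := by
      intro n
      rw [mul_right_comm]
      refine mul_le_mul_left ?_ _
      calc w n * I n = (2⁻¹ : ℝ≥0∞) ^ n * ((1 + I n)⁻¹ * I n) := by rw [hw]; ring
        _ ≤ (2⁻¹ : ℝ≥0∞) ^ n * ((1 + I n)⁻¹ * (1 + I n)) := by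
            refine mul_le_mul_right (mul_le_mul_right (le_add_self) _) _
        _ = (2⁻¹ : ℝ≥0∞) ^ n := by
            rw [ENNReal.inv_mul_cancel (h1I0 n) (h1It n), mul_one]
    refine ne_top_of_le_ne_top ?_ (ENNReal.tsum_le_tsum hterm)
    rw [ENNReal.tsum_mul_right, hgeom]
    exact ENNReal.mul_ne_top (by simp) (ENNReal.inv_ne_top.2 hWne)

end Mix

section Basis

variable {α : Type*} [MeasurableSpace α]

/-- Geometric mixture of a countable family of measures. -/
def gmix (f : ℕ → Measure α) : Measure α :=
  Measure.sum (fun n => (2⁻¹ : ℝ≥0∞) ^ (n + 1) • f n)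

lemma gmix_null_iff (f : ℕ → Measure α) {A : Set α} (hA : MeasurableSet A) :
    gmix f A = 0 ↔ ∀ n, f n A = 0 := by
  rw [gmix, Measure.sum_apply _ hA, ENNReal.tsum_eq_zero]
  have hc : ∀ n : ℕ, ((2⁻¹ : ℝ≥0∞) ^ (n + 1)) ≠ 0 :=
    fun n => pow_ne_zero _ (ENNReal.inv_ne_zero.2 (by simp))
  constructor
  · intro h0 n
    have := h0 n
    rw [Measure.smul_apply, smul_eq_mul, mul_eq_zero] at this
    exact this.resolve_left (hc n)
  · intro h0 n
    rw [Measure.smul_apply, smul_eq_mul, h0 n, mul_zero]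

lemma gmix_fin (f : ℕ → Measure α) (hp : ∀ n, IsProbabilityMeasure (f n)) :
    IsFiniteMeasure (gmix f) := by
  constructor
  rw [gmix, Measure.sum_apply _ MeasurableSet.univ]
  simp only [Measure.smul_apply, smul_eq_mul, measure_univ, mul_one]
  calc (∑' n : ℕ, (2⁻¹ : ℝ≥0∞) ^ (n + 1)) ≤ ∑' n : ℕ, (2⁻¹ : ℝ≥0∞) ^ n :=
        ENNReal.tsum_le_tsum fun n => pow_le_pow_right_of_le_one' (by simp : (2⁻¹:ℝ≥0∞) ≤ 1)
          (Nat.le_succ n)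
    _ = 2 := by rw [ENNReal.tsum_geometric, ENNReal.one_sub_inv_two, inv_inv]
    _ < ∞ := by simp

lemma exists_countable_basis (m : Measure α) [SigmaFinite m]
    (M : Set (Measure α)) (hMne : M.Nonempty)
    (hfin : ∀ ν ∈ M, IsProbabilityMeasure ν)
    (hac : ∀ ν ∈ M, ν ≪ m)
    (hmin : ∀ A : Set α, MeasurableSet A → 0 < m A → ∃ ν ∈ M, 0 < ν A) :
    ∃ g : ℕ → Measure α, (∀ n, g n ∈ M) ∧
      ∀ A : Set α, MeasurableSet A → (∀ n, g n A = 0) → m A = 0 := by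
  classical
  obtain ⟨m', hm'fin, hmm', hm'm⟩ := exists_isFiniteMeasure_absolutelyContinuous m
  haveI := hm'fin
  -- supports
  let S : Measure α → Set α := fun μ => {x | 0 < μ.rnDeriv m' x}
  have hSmeas : ∀ μ, MeasurableSet (S μ) :=
    fun μ => measurableSet_lt measurable_const (Measure.measurable_rnDeriv _ _)
  -- key equivalence: for finite μ ≪ m', a measurable set is μ-null iff its
  -- intersection with the support of μ is m'-null.
  have hkey : ∀ (μ : Measure α), IsFiniteMeasure μ → μ ≪ m' → ∀ A : Set α, MeasurableSet A →
      (μ A = 0 ↔ m' (A ∩ S μ) = 0) := by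
    intro μ hμfin hμ A hA
    haveI := hμfin
    rw [← Measure.setLIntegral_rnDeriv hμ A,
      setLIntegral_eq_zero_iff hA (Measure.measurable_rnDeriv _ _), ae_iff]
    have hset : {x | ¬(x ∈ A → μ.rnDeriv m' x = 0)} = A ∩ S μ := by
      ext x
      simp only [Set.mem_setOf_eq, Set.mem_inter_iff, Classical.not_imp, S, zero_lt_iff]
    rw [hset]
  -- support monotonicity under absolute continuity
  have hsupp : ∀ (μ ν : Measure α), IsFiniteMeasure μ → IsFiniteMeasure ν →
      μ ≪ ν → ν ≪ m' → ∀ᵐ x ∂m', x ∈ S μ → x ∈ S ν := by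
    intro μ ν hμfin hνfin hμν hνm'
    haveI := hμfin; haveI := hνfin
    have hμm' : μ ≪ m' := hμν.trans hνm'
    set Z := {x | ν.rnDeriv m' x = 0} with hZ
    have hZmeas : MeasurableSet Z :=
      (Measure.measurable_rnDeriv ν m') (measurableSet_singleton 0)
    have hνZ : ν Z = 0 := by
      rw [← Measure.setLIntegral_rnDeriv hνm' Z,
        setLIntegral_eq_zero_iff hZmeas (Measure.measurable_rnDeriv _ _)]
      exact ae_of_all _ fun x hx => hx
    have hμZ : μ Z = 0 := hμν hνZ
    rw [← Measure.setLIntegral_rnDeriv hμm' Z,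
      setLIntegral_eq_zero_iff hZmeas (Measure.measurable_rnDeriv _ _)] at hμZ
    filter_upwards [hμZ] with x hx hxμ
    simp only [S, Set.mem_setOf_eq, pos_iff_ne_zero] at hxμ ⊢
    intro hν0
    exact hxμ (hx hν0)
  -- the family of geometric mixtures of sequences in M
  have hMν : ∀ ν ∈ M, ν ≪ m' := fun ν hν => (hac ν hν).trans hmm'
  have hgm' : ∀ f : ℕ → {ν : Measure α // ν ∈ M}, gmix (fun n => (f n).1) ≪ m' := by
    intro f
    refine Measure.AbsolutelyContinuous.mk fun A hA h0 => ?_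
    exact (gmix_null_iff _ hA).2 fun n => hMν _ (f n).2 h0
  have hgfin : ∀ f : ℕ → {ν : Measure α // ν ∈ M},
      IsFiniteMeasure (gmix (fun n => (f n).1)) :=
    fun f => gmix_fin _ fun n => hfin _ (f n).2
  have hACcomp : ∀ (f f' : ℕ → {ν : Measure α // ν ∈ M}), (∀ j, ∃ i, f j = f' i) →
      gmix (fun n => (f n).1) ≪ gmix (fun n => (f' n).1) := by
    intro f f' hcomp
    refine Measure.AbsolutelyContinuous.mk fun A hA h0 => ?_
    rw [gmix_null_iff _ hA] at h0 ⊢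
    intro j
    obtain ⟨i, hi⟩ := hcomp j
    rw [hi]
    exact h0 i
  have hSle : ∀ (f f' : ℕ → {ν : Measure α // ν ∈ M}),
      gmix (fun n => (f n).1) ≪ gmix (fun n => (f' n).1) →
      m' (S (gmix (fun n => (f n).1))) ≤ m' (S (gmix (fun n => (f' n).1))) := by
    intro f f' hff'
    exact measure_mono_ae (hsupp _ _ (hgfin f) (hgfin f') hff' (hgm' f'))
  -- the supremum of support masses
  set V : Set ℝ≥0∞ :=
    Set.range (fun f : ℕ → {ν : Measure α // ν ∈ M} => m' (S (gmix fun n => (f n).1))) with hV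
  have hVne : V.Nonempty := ⟨_, ⟨fun _ => ⟨hMne.choose, hMne.choose_spec⟩, rfl⟩⟩
  set s := sSup V with hs
  have hstop : s ≠ ∞ := by
    refine ne_top_of_le_ne_top (measure_ne_top m' Set.univ) (sSup_le ?_)
    rintro v ⟨f, rfl⟩
    exact measure_mono (Set.subset_univ _)
  have hseq : ∀ k : ℕ, ∃ f : ℕ → {ν : Measure α // ν ∈ M},
      s ≤ m' (S (gmix fun n => (f n).1)) + ((k : ℝ≥0∞) + 1)⁻¹ := by
    intro k
    by_cases hs0 : s = 0
    · obtain ⟨v, f, rfl⟩ := hVne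
      exact ⟨f, by simp [hs0]⟩
    · have hlt : s - ((k : ℝ≥0∞) + 1)⁻¹ < s :=
        ENNReal.sub_lt_self hstop hs0 (by simp)
      rw [hs] at hlt
      obtain ⟨v, hvV, hv⟩ := lt_sSup_iff.mp hlt
      obtain ⟨f, rfl⟩ := hvV
      exact ⟨f, tsub_le_iff_right.mp hv.le⟩
  choose F hF using hseq
  set g2 : ℕ → {ν : Measure α // ν ∈ M} :=
    fun n => F (Nat.unpair n).1 (Nat.unpair n).2 with hg2
  have hcomp2 : ∀ k, ∀ j, ∃ i, F k j = g2 i :=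
    fun k j => ⟨Nat.pair k j, by rw [hg2]; simp⟩
  have hgs : ∀ k, m' (S (gmix fun n => ((F k) n).1)) ≤ m' (S (gmix fun n => (g2 n).1)) :=
    fun k => hSle _ _ (hACcomp _ _ (hcomp2 k))
  have hs2 : s ≤ m' (S (gmix fun n => (g2 n).1)) := by
    refine ENNReal.le_of_forall_pos_le_add fun ε hε _ => ?_
    obtain ⟨k, hk⟩ := ENNReal.exists_inv_nat_lt
      (show ((ε : ℝ≥0∞)) ≠ 0 by simpa using hε.ne')
    calc s ≤ m' (S (gmix fun n => ((F k) n).1)) + ((k : ℝ≥0∞) + 1)⁻¹ := hF k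
      _ ≤ m' (S (gmix fun n => (g2 n).1)) + ε := by
          refine add_le_add (hgs k) ?_
          refine le_trans (le_trans ?_ hk.le) le_rfl
          exact ENNReal.inv_le_inv.2 (by simp)
  have hs2' : m' (S (gmix fun n => (g2 n).1)) = s :=
    le_antisymm (le_sSup ⟨g2, rfl⟩) hs2
  -- conclusion
  refine ⟨fun n => (g2 n).1, fun n => (g2 n).2, ?_⟩
  intro A hA hA0
  by_contra hm0
  have hpos : 0 < m A := zero_lt_iff.mpr hm0
  obtain ⟨ν, hνM, hνA⟩ := hmin A hA hpos
  haveI := hfin ν hνM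
  set g3 : ℕ → {ν : Measure α // ν ∈ M} :=
    fun n => Nat.rec ⟨ν, hνM⟩ (fun k _ => g2 k) n with hg3
  have hsub23 : gmix (fun n => (g2 n).1) ≪ gmix (fun n => (g3 n).1) :=
    hACcomp _ _ fun j => ⟨j + 1, rfl⟩
  have h23 : ∀ᵐ x ∂m', x ∈ S (gmix fun n => (g2 n).1) → x ∈ S (gmix fun n => (g3 n).1) :=
    hsupp _ _ (hgfin g2) (hgfin g3) hsub23 (hgm' g3)
  have hle3 : m' (S (gmix fun n => (g3 n).1)) ≤ s := le_sSup ⟨g3, rfl⟩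
  have hge23 : m' (S (gmix fun n => (g2 n).1)) ≤ m' (S (gmix fun n => (g3 n).1)) :=
    hSle _ _ hsub23
  -- difference is null
  set S2 := S (gmix fun n => (g2 n).1)
  set S3 := S (gmix fun n => (g3 n).1)
  have hdiff20 : m' (S2 \ S3) = 0 := by
    rw [ae_iff] at h23
    refine measure_mono_null ?_ h23
    intro x hx
    simp only [Set.mem_setOf_eq, Classical.not_imp]
    exact ⟨hx.1, hx.2⟩
  have h2eq : m' (S2 ∩ S3) = m' S2 := by
    have := measure_inter_add_diff (μ := m') S2 (hSmeas (gmix fun n => (g3 n).1))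
    rw [hdiff20, add_zero] at this
    exact this
  have hdiff32 : m' (S3 \ S2) = 0 := by
    have h1 := measure_inter_add_diff (μ := m') S3 (hSmeas (gmix fun n => (g2 n).1))
    have h2 : m' (S3 ∩ S2) = s := by
      rw [Set.inter_comm, h2eq, hs2']
    rw [h2] at h1
    have h3 : s + m' (S3 \ S2) ≤ s + 0 := by
      rw [add_zero, h1]
      exact hle3
    exact le_antisymm (by exact_mod_cast (ENNReal.add_le_add_iff_left hstop).mp h3)
      zero_le'
  -- positivity of the support of ν inside A
  have hνm' : ν ≪ m' := hMν ν hνM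
  have hνg3 : ν ≪ gmix (fun n => (g3 n).1) := by
    refine Measure.AbsolutelyContinuous.mk fun B hB h0 => ?_
    rw [gmix_null_iff _ hB] at h0
    exact h0 0
  have hνpos : 0 < m' (A ∩ S ν) := by
    rw [zero_lt_iff]
    intro h0
    rw [← hkey ν inferInstance hνm' A hA] at h0
    exact absurd h0 hνA.ne'
  have hν3 : ∀ᵐ x ∂m', x ∈ S ν → x ∈ S3 :=
    hsupp _ _ inferInstance (hgfin g3) hνg3 (hgm' g3)
  have hA3 : 0 < m' (A ∩ S ν ∩ S3) := by
    have hnull : m' ((A ∩ S ν) \ S3) = 0 := by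
      rw [ae_iff] at hν3
      refine measure_mono_null ?_ hν3
      intro x hx
      simp only [Set.mem_diff, Set.mem_inter_iff] at hx
      simp only [Set.mem_setOf_eq, Classical.not_imp]
      exact ⟨hx.1.2, hx.2⟩
    have h1 := measure_inter_add_diff (μ := m') (A ∩ S ν) (hSmeas (gmix fun n => (g3 n).1))
    rw [hnull, add_zero] at h1
    rw [h1]
    exact hνpos
  have hA2 : 0 < m' (A ∩ S2) := by
    have hsub : A ∩ S ν ∩ S3 ⊆ (A ∩ S2) ∪ (S3 \ S2) := by
      intro x hx
      by_cases hx2 : x ∈ S2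
      · exact Or.inl ⟨hx.1.1, hx2⟩
      · exact Or.inr ⟨hx.2, hx2⟩
    calc 0 < m' (A ∩ S ν ∩ S3) := hA3
      _ ≤ m' ((A ∩ S2) ∪ (S3 \ S2)) := measure_mono hsub
      _ ≤ m' (A ∩ S2) + m' (S3 \ S2) := measure_union_le _ _
      _ = m' (A ∩ S2) := by rw [hdiff32, add_zero]
  -- but A is null for the mixture g2
  have hg2A : gmix (fun n => (g2 n).1) A = 0 := (gmix_null_iff _ hA).2 hA0
  rw [hkey _ (hgfin g2) (hgm' g2) A hA] at hg2A
  exact absurd hg2A hA2.ne'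

end Basis

section Helpers

variable {d : ℕ} {T : ℝ} (h : (0:ℝ) ≤ T)

/-- The constant path. -/
def cpath (T : ℝ) (x : Ed d) : PathSp d 0 T := ContinuousMap.const _ x

lemma measurable_cpath : Measurable (cpath (d := d) T) :=
  (ContinuousMap.continuous_const').measurable

lemma map_eval_dirac_cpath (x : Ed d) :
    Measure.map (eval h 0) (Measure.dirac (cpath T x)) = Measure.dirac x := by
  rw [Measure.map_dirac' (measurable_eval h 0)]
  rfl

lemma measurable_diracset {κ : Ed d → Measure (PathSp d 0 T)} (hκ : Measurable κ)
    (hp : ∀ x, IsProbabilityMeasure (κ x)) :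
    MeasurableSet {x | κ x {γ | eval h 0 γ = x} = 1} := by
  set K : ProbabilityTheory.Kernel (Ed d) (PathSp d 0 T) := ⟨κ, hκ⟩ with hK
  haveI : ProbabilityTheory.IsMarkovKernel K := ⟨hp⟩
  have hmeas : Measurable fun x => K x (Prod.mk x ⁻¹' evGraph h) :=
    ProbabilityTheory.Kernel.measurable_kernel_prodMk_left (measurableSet_evGraph h)
  have hset : {x | κ x {γ | eval h 0 γ = x} = 1} =
      (fun x => K x (Prod.mk x ⁻¹' evGraph h)) ⁻¹' {1} := rfl
  rw [hset]
  exact hmeas (measurableSet_singleton 1)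

lemma ac_left_two {β : Type*} [MeasurableSpace β] (μ1 μ2 : Measure β) :
    μ1 ≪ (2⁻¹ : ℝ≥0∞) • μ1 + (2⁻¹ : ℝ≥0∞) • μ2 := by
  refine Measure.AbsolutelyContinuous.mk fun A hA h0 => ?_
  rw [Measure.add_apply, Measure.smul_apply, Measure.smul_apply, smul_eq_mul, smul_eq_mul,
    add_eq_zero] at h0
  rcases mul_eq_zero.mp h0.1 with hc | hc
  · exact absurd hc (by simp)
  · exact hc

lemma ac_right_two {β : Type*} [MeasurableSpace β] (μ1 μ2 : Measure β) :
    μ2 ≪ (2⁻¹ : ℝ≥0∞) • μ1 + (2⁻¹ : ℝ≥0∞) • μ2 := by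
  refine Measure.AbsolutelyContinuous.mk fun A hA h0 => ?_
  rw [Measure.add_apply, Measure.smul_apply, Measure.smul_apply, smul_eq_mul, smul_eq_mul,
    add_eq_zero] at h0
  rcases mul_eq_zero.mp h0.2 with hc | hc
  · exact absurd hc (by simp)
  · exact hc

lemma two_halves : ((2 : ℝ≥0) : ℝ≥0∞) * (2⁻¹ : ℝ≥0∞) = 1 := by
  rw [ENNReal.coe_ofNat]
  exact ENNReal.mul_inv_cancel (by simp) (by simp)

lemma le_two_smul_left {β : Type*} [MeasurableSpace β] (μ1 μ2 : Measure β) :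
    μ1 ≤ (2 : ℝ≥0) • ((2⁻¹ : ℝ≥0∞) • μ1 + (2⁻¹ : ℝ≥0∞) • μ2) := by
  refine Measure.le_iff.2 fun s hs => ?_
  simp only [Measure.smul_apply, Measure.add_apply, smul_eq_mul, ENNReal.smul_def]
  rw [mul_add, ← mul_assoc, two_halves, one_mul]
  exact le_add_right le_rfl

lemma le_two_smul_right {β : Type*} [MeasurableSpace β] (μ1 μ2 : Measure β) :
    μ2 ≤ (2 : ℝ≥0) • ((2⁻¹ : ℝ≥0∞) • μ1 + (2⁻¹ : ℝ≥0∞) • μ2) := by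
  refine Measure.le_iff.2 fun s hs => ?_
  simp only [Measure.smul_apply, Measure.add_apply, smul_eq_mul, ENNReal.smul_def]
  rw [mul_add]
  have hrw : ((2:ℝ≥0):ℝ≥0∞) * ((2⁻¹:ℝ≥0∞) * μ2 s) = μ2 s := by
    rw [← mul_assoc, two_halves, one_mul]
  rw [hrw]
  exact le_add_self

end Helpers
/-- **Equivalence between well-posedness and martingale flows under a domination
condition**. -/
theorem wellposedness_iff_flow_domination (hd : 1 ≤ d) (hT : 0 < T)
    (a : ℝ → Ed d → Matrix (Fin d) (Fin d) ℝ) (b : ℝ → Ed d → Ed d)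
    (hsym : ∀ t x, (a t x).IsSymm ∧ (a t x).PosSemidef)
    (R : Set (ℝ → Measure (Ed d)))
    (hR : ∀ μ ∈ R, (∀ t ∈ Icc (0 : ℝ) T, IsProbabilityMeasure (μ t)) ∧
      NarrowlyCts 0 T μ ∧ IsFPE 0 T a b μ)
    (m : Measure (Ed d)) (hm : SigmaFinite m)
    -- domination: every initial law in 𝓡₀ is absolutely continuous w.r.t. m
    (hdomin : ∀ ν₀ : Measure (Ed d), (∃ μ ∈ R, μ 0 = ν₀) → ν₀ ≪ m)
    -- minimality of m
    (hmin : ∀ A : Set (Ed d), MeasurableSet A → 0 < m A →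
      ∃ ν₀ : Measure (Ed d), (∃ μ ∈ R, μ 0 = ν₀) ∧ 0 < ν₀ A) :
    -- (i) ⟹ (ii) under convex and bounded-disintegration stability:
    ((ConvexStable hT.le a b R → BoundedDisintStable hT.le a b R →
      (∃ sel : Measure (Ed d) → Measure (PathSp d 0 T), Measurable sel ∧
        ∀ ν₀ : Measure (Ed d), (∃ μ ∈ R, μ 0 = ν₀) →
          RRegMP hT.le a b R (sel ν₀) ∧ Measure.map (eval hT.le 0) (sel ν₀) = ν₀ ∧
          ∀ η, RRegMP hT.le a b R η → Measure.map (eval hT.le 0) η = ν₀ →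
            η = sel ν₀) →
      ((∃ ηx, IsRMF hT.le a b R ηx) ∧
        ∀ η1 η2 : Ed d → Measure (PathSp d 0 T),
          IsRMF hT.le a b R η1 → IsRMF hT.le a b R η2 →
          ∀ᵐ x ∂m, η1 x = η2 x))) ∧
    -- (ii) ⟹ (i) under convex and a.c.-disintegration stability:
    ((ConvexStable hT.le a b R → ACDisintStable hT.le a b R →
      ((∃ ηx, IsRMF hT.le a b R ηx) ∧
        ∀ η1 η2 : Ed d → Measure (PathSp d 0 T),
          IsRMF hT.le a b R η1 → IsRMF hT.le a b R η2 →
          ∀ᵐ x ∂m, η1 x = η2 x) →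
      (∃ sel : Measure (Ed d) → Measure (PathSp d 0 T), Measurable sel ∧
        ∀ ν₀ : Measure (Ed d), (∃ μ ∈ R, μ 0 = ν₀) →
          RRegMP hT.le a b R (sel ν₀) ∧ Measure.map (eval hT.le 0) (sel ν₀) = ν₀ ∧
          ∀ η, RRegMP hT.le a b R η → Measure.map (eval hT.le 0) η = ν₀ →
            η = sel ν₀))) := by
  haveI := hm
  have hMprob : ∀ ν₀ : Measure (Ed d), (∃ μ ∈ R, μ 0 = ν₀) → IsProbabilityMeasure ν₀ := by
    rintro ν₀ ⟨μ, hμ, rfl⟩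
    exact (hR μ hμ).1 0 ⟨le_refl 0, hT.le⟩
  have hbasis : (∃ ν₀ : Measure (Ed d), ∃ μ ∈ R, μ 0 = ν₀) →
      ∃ g : ℕ → Measure (Ed d), (∀ n, ∃ μ ∈ R, μ 0 = g n) ∧
        ∀ A : Set (Ed d), MeasurableSet A → (∀ n, g n A = 0) → m A = 0 := by
    intro hne
    obtain ⟨g, hg1, hg2⟩ := exists_countable_basis m {ν | ∃ μ ∈ R, μ 0 = ν}
      ⟨hne.choose, hne.choose_spec⟩ (fun ν hν => hMprob ν hν) (fun ν hν => hdomin ν hν)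
      (fun A hA hpos => by
        obtain ⟨ν₀, hν₀, hp⟩ := hmin A hA hpos
        exact ⟨ν₀, hν₀, hp⟩)
    exact ⟨g, hg1, hg2⟩
  constructor
  · -- (i) ⟹ (ii)
    intro hCS hBD hsel
    obtain ⟨sel, hselm, hselp⟩ := hsel
    by_cases hRne : ∃ ν₀ : Measure (Ed d), ∃ μ ∈ R, μ 0 = ν₀
    · -- 𝓡₀ nonempty
      obtain ⟨g, hgM, hgbasis⟩ := hbasis hRne
      have hgprob : ∀ n, IsProbabilityMeasure (g n) := fun n => hMprob _ (hgM n)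
      have hselreg : ∀ n, RRegMP hT.le a b R (sel (g n)) := fun n => (hselp (g n) (hgM n)).1
      have hselmap : ∀ n, Measure.map (eval hT.le 0) (sel (g n)) = g n :=
        fun n => (hselp (g n) (hgM n)).2.1
      obtain ⟨c, hc0, hc1, hcI⟩ := exists_weights (fun n => Imix hT.le a b (sel (g n)))
        (fun n => Imix_ne_top hT.le hR (hselreg n))
      set ηhat : Measure (PathSp d 0 T) := Measure.sum (fun n => c n • sel (g n)) with hηhatdef
      set νhat : Measure (Ed d) := Measure.sum (fun n => c n • g n) with hνhatdef
      have hηhatreg : RRegMP hT.le a b R ηhat := mix_RReg hT.le hCS c hc1 _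
        (fun n => RReg_prob hT.le (hselreg n)) (fun n _ => hselreg n) hcI
      haveI hηhatprob : IsProbabilityMeasure ηhat := RReg_prob hT.le hηhatreg
      haveI hνhatprob : IsProbabilityMeasure νhat := sum_smul_prob c hc1 g hgprob
      have hmapηhat : Measure.map (eval hT.le 0) ηhat = νhat := by
        rw [hηhatdef, map_eval_sum hT.le 0 c, hνhatdef]
        congr 1
        funext n
        rw [hselmap n]
      have hνhatM : ∃ μ ∈ R, μ 0 = νhat := by
        obtain ⟨μ, hμ, hμ0⟩ := RReg_initial hT.le hηhatreg
        exact ⟨μ, hμ, by rw [hμ0, hmapηhat]⟩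
      have hηhatsel : ηhat = sel νhat := (hselp νhat hνhatM).2.2 ηhat hηhatreg hmapηhat
      have hmνhat : m ≪ νhat := by
        refine Measure.AbsolutelyContinuous.mk fun A hA h0 => ?_
        refine hgbasis A hA fun n => ?_
        rw [hνhatdef, Measure.sum_apply _ hA, ENNReal.tsum_eq_zero] at h0
        have h0n := h0 n
        rw [Measure.smul_apply, smul_eq_mul, mul_eq_zero] at h0n
        exact h0n.resolve_left (hc0 n)
      obtain ⟨κ, hκm, hκrcp⟩ := exists_isRCP hT.le ηhat
      set D := {x | κ x {γ | eval hT.le 0 γ = x} = 1} with hDdef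
      have hDmeas : MeasurableSet D := measurable_diracset hT.le hκm hκrcp.2.1
      have hνhatD : νhat Dᶜ = 0 := by
        have h4 := hκrcp.2.2.2
        rw [hmapηhat, ae_iff] at h4
        exact h4
      set ηfl : Ed d → Measure (PathSp d 0 T) :=
        fun x => if x ∈ D then κ x else Measure.dirac (cpath T x) with hηfldef
      have hηflm : Measurable ηfl :=
        Measurable.ite hDmeas hκm (Measure.measurable_dirac.comp measurable_cpath)
      have hηflprob : ∀ x, IsProbabilityMeasure (ηfl x) := by
        intro x
        have hrfl : ηfl x = if x ∈ D then κ x else Measure.dirac (cpath T x) := rfl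
        rw [hrfl]
        by_cases hx : x ∈ D
        · rw [if_pos hx]; exact hκrcp.2.1 x
        · rw [if_neg hx]; infer_instance
      -- key regularity of binds against κ
      have hbindreg : ∀ ν₀ : Measure (Ed d), (∃ μ ∈ R, μ 0 = ν₀) →
          RRegMP hT.le a b R (ν₀.bind κ) := by
        intro ν₀ hν₀M
        haveI hν₀prob : IsProbabilityMeasure ν₀ := hMprob ν₀ hν₀M
        have hν₀reg := (hselp ν₀ hν₀M).1
        haveI : IsProbabilityMeasure (sel ν₀) := RReg_prob hT.le hν₀reg
        set η' : Measure (PathSp d 0 T) :=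
          (2⁻¹ : ℝ≥0∞) • sel ν₀ + (2⁻¹ : ℝ≥0∞) • ηhat with hη'def
        have hη'reg : RRegMP hT.le a b R η' := mix_two_RReg hT.le hCS hν₀reg hηhatreg
          (Imix_ne_top hT.le hR hν₀reg) (Imix_ne_top hT.le hR hηhatreg)
        haveI : IsProbabilityMeasure η' := prob_two _ _
        have hν'map : Measure.map (eval hT.le 0) η' =
            (2⁻¹ : ℝ≥0∞) • ν₀ + (2⁻¹ : ℝ≥0∞) • νhat := by
          rw [hη'def, map_eval_add2, (hselp ν₀ hν₀M).2.1, hmapηhat]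
        obtain ⟨κ', hκ'm, hκ'rcp⟩ := exists_isRCP hT.le η'
        have hregν₀ : RRegMP hT.le a b R (ν₀.bind κ') := by
          refine hBD η' hη'reg κ' hκ'rcp ν₀ hν₀prob ⟨2, by norm_num, ?_⟩
          rw [hν'map]
          exact le_two_smul_left _ _
        have hregνhat : RRegMP hT.le a b R (νhat.bind κ') := by
          refine hBD η' hη'reg κ' hκ'rcp νhat hνhatprob ⟨2, by norm_num, ?_⟩
          rw [hν'map]
          exact le_two_smul_right _ _
        have hνhatν' : νhat ≪ Measure.map (eval hT.le 0) η' := by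
          rw [hν'map]; exact ac_right_two _ _
        have hdirκ'νhat : ∀ᵐ x ∂νhat, κ' x {γ | eval hT.le 0 γ = x} = 1 :=
          hνhatν'.ae_le hκ'rcp.2.2.2
        have hmapbindνhat : Measure.map (eval hT.le 0) (νhat.bind κ') = νhat :=
          map_eval_bind hT.le hκ'm hκ'rcp.2.1 hdirκ'νhat
        have hbindνhatκ' : νhat.bind κ' = ηhat := by
          rw [hηhatsel]
          exact (hselp νhat hνhatM).2.2 _ hregνhat hmapbindνhat
        have hκ'rcpηhat : IsRCP hT.le ηhat κ' := by
          refine ⟨hκ'rcp.1, hκ'rcp.2.1, ?_, ?_⟩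
          · rw [hmapηhat]; exact hbindνhatκ'
          · rw [hmapηhat]; exact hdirκ'νhat
        have hκκ' : ∀ᵐ x ∂νhat, κ x = κ' x := by
          have hu := isRCP_ae_eq hT.le ηhat hκm hκ'm hκrcp hκ'rcpηhat
          rwa [hmapηhat] at hu
        have hν₀νhat : ν₀ ≪ νhat := (hdomin ν₀ hν₀M).trans hmνhat
        have hbb : ν₀.bind κ = ν₀.bind κ' := bind_congr_ae hκm hκ'm (hν₀νhat.ae_le hκκ')
        rw [hbb]
        exact hregν₀
      refine ⟨⟨ηfl, ?_, hηflprob, ?_, ?_⟩, ?_⟩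
      · intro A hA; exact (Measure.measurable_coe hA).comp hηflm
      · intro x
        have hrfl : ηfl x = if x ∈ D then κ x else Measure.dirac (cpath T x) := rfl
        rw [hrfl]
        by_cases hx : x ∈ D
        · rw [if_pos hx]
          haveI := hκrcp.2.1 x
          exact map_eval_eq_dirac hT.le (κ x) hx
        · rw [if_neg hx]; exact map_eval_dirac_cpath hT.le x
      · intro ν₀ hν₀M
        have hν₀νhat : ν₀ ≪ νhat := (hdomin ν₀ hν₀M).trans hmνhat
        have hD0 : ν₀ Dᶜ = 0 := hν₀νhat hνhatD
        have hmem : ∀ᵐ x ∂ν₀, x ∈ D := by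
          rw [ae_iff]
          exact hD0
        have hae : ∀ᵐ x ∂ν₀, ηfl x = κ x := by
          filter_upwards [hmem] with x hx
          exact if_pos hx
        rw [bind_congr_ae hηflm hκm hae]
        exact hbindreg ν₀ hν₀M
      · -- a.e. uniqueness of flows
        intro η1 η2 h1 h2
        have hη1m : Measurable η1 := Measure.measurable_of_measurable_coe _ h1.1
        have hη2m : Measurable η2 := Measure.measurable_of_measurable_coe _ h2.1
        have hmass1 : ∀ x, η1 x {γ | eval hT.le 0 γ = x} = 1 := fun x => by
          haveI := h1.2.1 x
          exact mass_one_of_map_eval hT.le (η1 x) (h1.2.2.1 x)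
        have hmass2 : ∀ x, η2 x {γ | eval hT.le 0 γ = x} = 1 := fun x => by
          haveI := h2.2.1 x
          exact mass_one_of_map_eval hT.le (η2 x) (h2.2.2.1 x)
        have hbind12 : ∀ n : ℕ, (g n).bind η1 = (g n).bind η2 := by
          intro n
          haveI := hgprob n
          have hr1 : RRegMP hT.le a b R ((g n).bind η1) := h1.2.2.2 (g n) (hgM n)
          have hr2 : RRegMP hT.le a b R ((g n).bind η2) := h2.2.2.2 (g n) (hgM n)
          have hmap1 : Measure.map (eval hT.le 0) ((g n).bind η1) = g n :=
            map_eval_bind hT.le hη1m h1.2.1 (ae_of_all _ hmass1)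
          have hmap2 : Measure.map (eval hT.le 0) ((g n).bind η2) = g n :=
            map_eval_bind hT.le hη2m h2.2.1 (ae_of_all _ hmass2)
          rw [(hselp (g n) (hgM n)).2.2 _ hr1 hmap1, (hselp (g n) (hgM n)).2.2 _ hr2 hmap2]
        have hΘeq : νhat.bind η1 = νhat.bind η2 := by
          rw [hνhatdef, bind_sum c g hη1m, bind_sum c g hη2m]
          congr 1
          funext n
          rw [hbind12 n]
        haveI : IsProbabilityMeasure (νhat.bind η1) := bind_prob hη1m h1.2.1
        have hmapΘ : Measure.map (eval hT.le 0) (νhat.bind η1) = νhat :=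
          map_eval_bind hT.le hη1m h1.2.1 (ae_of_all _ hmass1)
        have hrcp1 : IsRCP hT.le (νhat.bind η1) η1 :=
          ⟨h1.1, h1.2.1, by rw [hmapΘ], by rw [hmapΘ]; exact ae_of_all _ hmass1⟩
        have hrcp2 : IsRCP hT.le (νhat.bind η1) η2 :=
          ⟨h2.1, h2.2.1, by rw [hmapΘ]; exact hΘeq.symm,
            by rw [hmapΘ]; exact ae_of_all _ hmass2⟩
        have hu := isRCP_ae_eq hT.le (νhat.bind η1) hη1m hη2m hrcp1 hrcp2
        rw [hmapΘ] at hu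
        exact hmνhat.ae_le hu
    · -- 𝓡₀ empty
      have hmz : m = 0 := by
        by_contra hne0
        have huniv : m Set.univ ≠ 0 := fun h0 =>
          hne0 (Measure.measure_univ_eq_zero.mp h0)
        obtain ⟨ν₀, hν₀, _⟩ := hmin Set.univ MeasurableSet.univ (zero_lt_iff.2 huniv)
        exact hRne ⟨ν₀, hν₀⟩
      refine ⟨⟨fun x => Measure.dirac (cpath T x), ?_, ?_, ?_, ?_⟩, ?_⟩
      · intro A hA
        exact (Measure.measurable_coe hA).comp (Measure.measurable_dirac.comp measurable_cpath)
      · intro x; infer_instance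
      · intro x; exact map_eval_dirac_cpath hT.le x
      · intro ν₀ hν₀; exact absurd ⟨ν₀, hν₀⟩ hRne
      · intro η1 η2 _ _
        rw [hmz]
        simp
  · -- (ii) ⟹ (i)
    intro hCS hAC hflow
    obtain ⟨⟨ηx, hRMF⟩, huniq⟩ := hflow
    have hηxm : Measurable ηx := Measure.measurable_of_measurable_coe _ hRMF.1
    have hmassx : ∀ x, ηx x {γ | eval hT.le 0 γ = x} = 1 := fun x => by
      haveI := hRMF.2.1 x
      exact mass_one_of_map_eval hT.le (ηx x) (hRMF.2.2.1 x)
    refine ⟨fun ν => ν.bind ηx, Measure.measurable_bind' hηxm, ?_⟩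
    intro ν₀ hν₀M
    haveI hν₀prob : IsProbabilityMeasure ν₀ := hMprob ν₀ hν₀M
    have hreg0 : RRegMP hT.le a b R (ν₀.bind ηx) := hRMF.2.2.2 ν₀ hν₀M
    have hmap0 : Measure.map (eval hT.le 0) (ν₀.bind ηx) = ν₀ :=
      map_eval_bind hT.le hηxm hRMF.2.1 (ae_of_all _ hmassx)
    refine ⟨hreg0, hmap0, ?_⟩
    intro η hηreg hηmap
    show η = ν₀.bind ηx
    obtain ⟨g, hgM, hgbasis⟩ := hbasis ⟨ν₀, hν₀M⟩
    have hgprob : ∀ n, IsProbabilityMeasure (g n) := fun n => hMprob _ (hgM n)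
    have hgreg : ∀ n, RRegMP hT.le a b R ((g n).bind ηx) := fun n => hRMF.2.2.2 _ (hgM n)
    obtain ⟨c, hc0, hc1, hcI⟩ := exists_weights (fun n => Imix hT.le a b ((g n).bind ηx))
      (fun n => Imix_ne_top hT.le hR (hgreg n))
    set νhat : Measure (Ed d) := Measure.sum (fun n => c n • g n) with hνhatdef
    haveI hνhatprob : IsProbabilityMeasure νhat := sum_smul_prob c hc1 g hgprob
    have hνhatm : νhat ≪ m := by
      refine Measure.AbsolutelyContinuous.mk fun A hA h0 => ?_
      rw [hνhatdef, Measure.sum_apply _ hA]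
      refine ENNReal.tsum_eq_zero.2 fun n => ?_
      rw [Measure.smul_apply, smul_eq_mul, hdomin (g n) (hgM n) h0, mul_zero]
    have hmνhat : m ≪ νhat := by
      refine Measure.AbsolutelyContinuous.mk fun A hA h0 => ?_
      refine hgbasis A hA fun n => ?_
      rw [hνhatdef, Measure.sum_apply _ hA, ENNReal.tsum_eq_zero] at h0
      have h0n := h0 n
      rw [Measure.smul_apply, smul_eq_mul, mul_eq_zero] at h0n
      exact h0n.resolve_left (hc0 n)
    have hθreg : RRegMP hT.le a b R (νhat.bind ηx) := by
      rw [hνhatdef, bind_sum c g hηxm]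
      exact mix_RReg hT.le hCS c hc1 _ (fun n => bind_prob hηxm hRMF.2.1)
        (fun n _ => hgreg n) hcI
    haveI : IsProbabilityMeasure η := RReg_prob hT.le hηreg
    haveI : IsProbabilityMeasure (νhat.bind ηx) := bind_prob hηxm hRMF.2.1
    set ηst : Measure (PathSp d 0 T) :=
      (2⁻¹ : ℝ≥0∞) • η + (2⁻¹ : ℝ≥0∞) • (νhat.bind ηx) with hηstdef
    have hηstreg : RRegMP hT.le a b R ηst := mix_two_RReg hT.le hCS hηreg hθreg
      (Imix_ne_top hT.le hR hηreg) (Imix_ne_top hT.le hR hθreg)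
    haveI : IsProbabilityMeasure ηst := prob_two _ _
    have hmapθ : Measure.map (eval hT.le 0) (νhat.bind ηx) = νhat :=
      map_eval_bind hT.le hηxm hRMF.2.1 (ae_of_all _ hmassx)
    have hmapst : Measure.map (eval hT.le 0) ηst =
        (2⁻¹ : ℝ≥0∞) • ν₀ + (2⁻¹ : ℝ≥0∞) • νhat := by
      rw [hηstdef, map_eval_add2, hηmap, hmapθ]
    obtain ⟨κ, hκm, hκrcp⟩ := exists_isRCP hT.le ηst
    set D := {x | κ x {γ | eval hT.le 0 γ = x} = 1} with hDdef
    have hDmeas : MeasurableSet D := measurable_diracset hT.le hκm hκrcp.2.1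
    have hstD : (Measure.map (eval hT.le 0) ηst) Dᶜ = 0 := by
      have h4 := hκrcp.2.2.2
      rw [ae_iff] at h4
      exact h4
    set ηtil : Ed d → Measure (PathSp d 0 T) :=
      fun x => if x ∈ D then κ x else ηx x with hηtildef
    have hηtilm : Measurable ηtil := Measurable.ite hDmeas hκm hηxm
    have hηtilprob : ∀ x, IsProbabilityMeasure (ηtil x) := by
      intro x
      have hrfl : ηtil x = if x ∈ D then κ x else ηx x := rfl
      rw [hrfl]
      by_cases hx : x ∈ D
      · rw [if_pos hx]; exact hκrcp.2.1 x
      · rw [if_neg hx]; exact hRMF.2.1 x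
    have hν₀st : ν₀ ≪ Measure.map (eval hT.le 0) ηst := by
      rw [hmapst]; exact ac_left_two _ _
    have hνhatst : νhat ≪ Measure.map (eval hT.le 0) ηst := by
      rw [hmapst]; exact ac_right_two _ _
    have haeD : ∀ ν : Measure (Ed d), ν ≪ Measure.map (eval hT.le 0) ηst →
        ν.bind κ = ν.bind ηtil := by
      intro ν hν
      refine (bind_congr_ae hηtilm hκm ?_).symm
      have hD0 : ν Dᶜ = 0 := hν hstD
      have hmem : ∀ᵐ x ∂ν, x ∈ D := by
        rw [ae_iff]
        exact hD0
      filter_upwards [hmem] with x hx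
      exact if_pos hx
    have hRMFtil : IsRMF hT.le a b R ηtil := by
      refine ⟨fun A hA => (Measure.measurable_coe hA).comp hηtilm, hηtilprob, ?_, ?_⟩
      · intro x
        have hrfl : ηtil x = if x ∈ D then κ x else ηx x := rfl
        rw [hrfl]
        by_cases hx : x ∈ D
        · rw [if_pos hx]
          haveI := hκrcp.2.1 x
          exact map_eval_eq_dirac hT.le (κ x) hx
        · rw [if_neg hx]; exact hRMF.2.2.1 x
      · intro nbar hnbarM
        have hnbarst : nbar ≪ Measure.map (eval hT.le 0) ηst :=
          ((hdomin nbar hnbarM).trans hmνhat).trans hνhatst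
        have hregκ := hAC ηst hηstreg κ hκrcp nbar hnbarM hnbarst
        rw [← haeD nbar hnbarst]
        exact hregκ
    have hflowae : ∀ᵐ x ∂m, ηtil x = ηx x := huniq ηtil ηx hRMFtil hRMF
    have hsteq : ηst = (2⁻¹ : ℝ≥0∞) • (ν₀.bind κ) + (2⁻¹ : ℝ≥0∞) • (νhat.bind κ) := by
      conv_lhs => rw [← hκrcp.2.2.1]
      rw [hmapst, bind_add2 _ _ hκm]
    have hνhatκ : νhat.bind κ = νhat.bind ηx := by
      rw [haeD νhat hνhatst]
      exact bind_congr_ae hηtilm hηxm (hνhatm.ae_le hflowae)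
    have hν₀κ : ν₀.bind κ = ν₀.bind ηx := by
      rw [haeD ν₀ hν₀st]
      exact bind_congr_ae hηtilm hηxm ((hdomin ν₀ hν₀M).ae_le hflowae)
    have hfinal : (2⁻¹ : ℝ≥0∞) • η + (2⁻¹ : ℝ≥0∞) • (νhat.bind ηx) =
        (2⁻¹ : ℝ≥0∞) • (ν₀.bind ηx) + (2⁻¹ : ℝ≥0∞) • (νhat.bind ηx) := by
      calc (2⁻¹ : ℝ≥0∞) • η + (2⁻¹ : ℝ≥0∞) • (νhat.bind ηx) = ηst := hηstdef.symm
        _ = (2⁻¹ : ℝ≥0∞) • (ν₀.bind κ) + (2⁻¹ : ℝ≥0∞) • (νhat.bind κ) := hsteq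
        _ = (2⁻¹ : ℝ≥0∞) • (ν₀.bind ηx) + (2⁻¹ : ℝ≥0∞) • (νhat.bind ηx) := by
            rw [hνhatκ, hν₀κ]
    ext s hs
    have happ := congrArg (fun μ : Measure (PathSp d 0 T) => μ s) hfinal
    simp only [Measure.add_apply, Measure.smul_apply, smul_eq_mul] at happ
    have hθfin : (2⁻¹ : ℝ≥0∞) * (νhat.bind ηx) s ≠ ∞ :=
      ENNReal.mul_ne_top (by simp) (measure_ne_top _ _)
    have hcancel := (ENNReal.add_left_inj hθfin).mp happ
    exact (ENNReal.mul_right_inj (by simp) (by simp)).mp hcancel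


end
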